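/- arXiv:2208.09442 — 2 statements merged into one kernel-verified Lean document; each statement's English description precedes it below -/
import Mathlib

section
/- Let Y be a Young diagram with n boxes, and for each box (i,j) ∈ Y define the arm length a(□) = #{j' > j : (i,j') ∈ Y} and leg length l(□) = #{i' > i : (i',j) ∈ Y}. Then in the character T(V) = V + V* u₁u₂ − V·V*(1−u₁)(1−u₂), where V = ∑_{(i,j)∈Y} u₁^{−i} u₂^{−j}, the result equals ∑_{□∈Y} u₁^{−l(□)} u₂^{a(□)+1} + ∑_{□∈Y} u₁^{l(□)+1} u₂^{−a(□)}. -/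
open scoped AddMonoidAlgebra

/-- The Laurent polynomial ring `ℤ[u₁^{±1}, u₂^{±1}]`, realized as the group
algebra of `ℤ × ℤ` over `ℤ`. -/
noncomputable abbrev Laurent2 : Type := AddMonoidAlgebra ℤ (ℤ × ℤ)

/-- The monomial `u₁^p * u₂^q`. -/
noncomputable def mono (p q : ℤ) : Laurent2 := AddMonoidAlgebra.single (p, q) 1

/-- The involution `u_i ↦ u_i⁻¹`. -/
noncomputable def star2 (f : Laurent2) : Laurent2 :=
  AddMonoidAlgebra.ofCoeff (Finsupp.mapDomain (fun p => -p) f.coeff)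

lemma star2_eq (f : Laurent2) : star2 f = AddMonoidAlgebra.mapDomain (fun p => -p) f := rfl

/-- Arm length of the box `(i, j)` in the Young diagram `Y`:
`a(□) = #{j' > j | (i, j') ∈ Y}`. -/
def armLen (Y : YoungDiagram) (c : ℕ × ℕ) : ℕ := Y.rowLen c.1 - c.2 - 1

/-- Leg length of the box `(i, j)` in the Young diagram `Y`:
`l(□) = #{i' > i | (i', j) ∈ Y}`. -/
def legLen (Y : YoungDiagram) (c : ℕ × ℕ) : ℕ := Y.colLen c.2 - c.1 - 1

/-- The character `V = ∑_{(i,j) ∈ Y} u₁^{-i} u₂^{-j}`. -/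
noncomputable def charV (Y : YoungDiagram) : Laurent2 :=
  ∑ c ∈ Y.cells, mono (-(c.1 : ℤ)) (-(c.2 : ℤ))

lemma mono_mul (p q p' q' : ℤ) : mono p q * mono p' q' = mono (p + p') (q + q') := by
  simp [mono, AddMonoidAlgebra.single_mul_single, Prod.mk_add_mk]

lemma mono_zero : mono 0 0 = 1 := rfl

lemma star2_mono (p q : ℤ) : star2 (mono p q) = mono (-p) (-q) := by
  rw [star2_eq]; simp [mono, AddMonoidAlgebra.mapDomain_single, Prod.neg_mk]

lemma star2_add (f g : Laurent2) : star2 (f + g) = star2 f + star2 g :=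
  AddMonoidAlgebra.mapDomain_add _ f g

lemma star2_zero : star2 0 = 0 := AddMonoidAlgebra.mapDomain_zero _

lemma star2_mul (f g : Laurent2) : star2 (f * g) = star2 f * star2 g := by
  have h := AddMonoidAlgebra.mapDomain_mul (negAddMonoidHom (α := ℤ × ℤ)) f g
  exact h

lemma star2_one : star2 1 = 1 := by
  rw [← mono_zero, star2_mono]; norm_num

lemma star2_sub (f g : Laurent2) : star2 (f - g) = star2 f - star2 g := by
  have : f = (f - g) + g := by ring
  have h2 := star2_add (f - g) g
  rw [← this] at h2
  exact eq_sub_of_add_eq h2.symm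

lemma star2_sum {ι : Type*} (s : Finset ι) (f : ι → Laurent2) :
    star2 (∑ i ∈ s, f i) = ∑ i ∈ s, star2 (f i) :=
  map_sum (⟨⟨star2, star2_zero⟩, star2_add⟩ : Laurent2 →+ Laurent2) f s

lemma mono_congr {p q p' q' : ℤ} (h1 : p = p') (h2 : q = q') : mono p q = mono p' q' := by
  rw [h1, h2]

lemma tele_down (g : ℤ → Laurent2) (c : ℤ) (m : ℕ) :
    ∑ i ∈ Finset.range m, (g (c - i) - g (c - i + 1)) = g (c - m + 1) - g (c + 1) := by
  induction m with
  | zero => simp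
  | succ n ih =>
    rw [Finset.sum_range_succ, ih]
    have h1 : c - ((n : ℤ) + 1) + 1 = c - n := by ring
    push_cast
    rw [h1]
    abel

lemma tele_up (g : ℤ → Laurent2) (c : ℤ) (m : ℕ) :
    ∑ i ∈ Finset.range m, (g (c + i) - g (c + i + 1)) = g c - g (c + m) := by
  induction m with
  | zero => simp
  | succ n ih =>
    rw [Finset.sum_range_succ, ih]
    push_cast
    abel

lemma sum_cells {M : Type*} [AddCommMonoid M] (Z : YoungDiagram) {R : ℕ}
    (hR : Z.colLen 0 ≤ R) (f : ℕ × ℕ → M) :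
    ∑ c ∈ Z.cells, f c = ∑ i ∈ Finset.range R, ∑ j ∈ Finset.range (Z.rowLen i), f (i, j) := by
  have hcells : Z.cells = (Finset.range R).biUnion (fun i => Z.row i) := by
    ext c
    simp only [Finset.mem_biUnion, Finset.mem_range, YoungDiagram.mem_row_iff,
      YoungDiagram.mem_cells]
    constructor
    · intro hc
      refine ⟨c.1, lt_of_lt_of_le ?_ hR, hc, rfl⟩
      exact YoungDiagram.mem_iff_lt_colLen.mp
        (Z.up_left_mem le_rfl (Nat.zero_le _) (show (c.1, c.2) ∈ Z from hc))
    · rintro ⟨i, _, hc, _⟩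
      exact hc
  rw [hcells, Finset.sum_biUnion]
  · refine Finset.sum_congr rfl fun i _ => ?_
    rw [YoungDiagram.row_eq_prod, Finset.sum_product]
    simp
  · intro x _ y _ hxy
    simp only [Finset.disjoint_left, YoungDiagram.mem_row_iff]
    rintro c ⟨_, h1⟩ ⟨_, h2⟩
    exact hxy (h1 ▸ h2 ▸ rfl)

lemma rowLen_eq {Z : YoungDiagram} {i m : ℕ} (h : ∀ j, (i, j) ∈ Z ↔ j < m) :
    Z.rowLen i = m := by
  have h1 : ¬ (m < Z.rowLen i) := fun hlt =>
    lt_irrefl m ((h m).mp (YoungDiagram.mem_iff_lt_rowLen.mpr hlt))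
  have h2 : ¬ (Z.rowLen i < m) := fun hlt =>
    lt_irrefl _ (YoungDiagram.mem_iff_lt_rowLen.mp ((h _).mpr hlt))
  omega

lemma colLen_eq {Z : YoungDiagram} {j m : ℕ} (h : ∀ i, (i, j) ∈ Z ↔ i < m) :
    Z.colLen j = m := by
  have h1 : ¬ (m < Z.colLen j) := fun hlt =>
    lt_irrefl m ((h m).mp (YoungDiagram.mem_iff_lt_colLen.mpr hlt))
  have h2 : ¬ (Z.colLen j < m) := fun hlt =>
    lt_irrefl _ (YoungDiagram.mem_iff_lt_colLen.mp ((h _).mpr hlt))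
  omega

section Erased

variable (Y : YoungDiagram) (a b : ℕ)

/-- The diagram `Y` with corner cell `(a, b)` removed, where `a` is the last
nonempty row and `b` the last cell of that row. -/
def erased (ha : Y.colLen 0 = a + 1) (hb : Y.rowLen a = b + 1) : YoungDiagram where
  cells := Y.cells.erase (a, b)
  isLowerSet := by
    intro x y hyx hx
    simp only [Finset.coe_erase, Set.mem_diff, Finset.mem_coe, YoungDiagram.mem_cells,
      Set.mem_singleton_iff] at hx ⊢
    obtain ⟨hxY, hxne⟩ := hx
    refine ⟨Y.isLowerSet hyx hxY, ?_⟩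
    rintro rfl
    apply hxne
    have h1 : x.1 < a + 1 := by
      rw [← ha]
      exact YoungDiagram.mem_iff_lt_colLen.mp
        (Y.up_left_mem le_rfl (Nat.zero_le _) (show (x.1, x.2) ∈ Y from hxY))
    have h2 : a ≤ x.1 := hyx.1
    have hx1 : x.1 = a := by omega
    have h3 : x.2 < b + 1 := by
      rw [← hb, ← hx1]
      exact YoungDiagram.mem_iff_lt_rowLen.mp (show (x.1, x.2) ∈ Y from hxY)
    have h4 : b ≤ x.2 := hyx.2
    have hx2 : x.2 = b := by omega
    rw [← hx1, ← hx2]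

lemma mem_erased (ha : Y.colLen 0 = a + 1) (hb : Y.rowLen a = b + 1) {c : ℕ × ℕ} :
    c ∈ erased Y a b ha hb ↔ c ∈ Y ∧ c ≠ (a, b) := by
  show c ∈ (erased Y a b ha hb).cells ↔ _
  simp [erased, YoungDiagram.mem_cells, and_comm]

lemma cells_erased (ha : Y.colLen 0 = a + 1) (hb : Y.rowLen a = b + 1) :
    (erased Y a b ha hb).cells = Y.cells.erase (a, b) := rfl

lemma mem_ab (hb : Y.rowLen a = b + 1) : (a, b) ∈ Y := by
  rw [YoungDiagram.mem_iff_lt_rowLen, hb]; omega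

lemma rowLen_erased_ne (ha : Y.colLen 0 = a + 1) (hb : Y.rowLen a = b + 1) {i : ℕ}
    (hia : i ≠ a) : (erased Y a b ha hb).rowLen i = Y.rowLen i := by
  apply rowLen_eq
  intro j
  rw [mem_erased, ← YoungDiagram.mem_iff_lt_rowLen]
  constructor
  · exact fun h => h.1
  · exact fun h => ⟨h, by simp [Prod.ext_iff]; omega⟩

lemma rowLen_erased_a (ha : Y.colLen 0 = a + 1) (hb : Y.rowLen a = b + 1) :
    (erased Y a b ha hb).rowLen a = b := by
  apply rowLen_eq
  intro j
  rw [mem_erased]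
  constructor
  · rintro ⟨h1, h2⟩
    rw [YoungDiagram.mem_iff_lt_rowLen, hb] at h1
    simp [Prod.ext_iff] at h2
    omega
  · intro hj
    exact ⟨by rw [YoungDiagram.mem_iff_lt_rowLen, hb]; omega, by simp [Prod.ext_iff]; omega⟩

lemma colLen_erased_ne (ha : Y.colLen 0 = a + 1) (hb : Y.rowLen a = b + 1) {j : ℕ}
    (hjb : j ≠ b) : (erased Y a b ha hb).colLen j = Y.colLen j := by
  apply colLen_eq
  intro i
  rw [mem_erased, ← YoungDiagram.mem_iff_lt_colLen]
  constructor
  · exact fun h => h.1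
  · exact fun h => ⟨h, by simp [Prod.ext_iff]; omega⟩

lemma colLen_b (ha : Y.colLen 0 = a + 1) (hb : Y.rowLen a = b + 1) :
    Y.colLen b = a + 1 := by
  apply colLen_eq
  intro i
  rw [YoungDiagram.mem_iff_lt_colLen]
  constructor
  · intro h
    calc i < Y.colLen b := h
    _ ≤ Y.colLen 0 := Y.colLen_anti 0 b (Nat.zero_le _)
    _ = a + 1 := ha
  · intro h
    have := YoungDiagram.mem_iff_lt_colLen.mp (mem_ab Y a b hb)
    omega

lemma colLen_le_b (ha : Y.colLen 0 = a + 1) (hb : Y.rowLen a = b + 1) {j : ℕ} (hj : j ≤ b) :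
    Y.colLen j = a + 1 := by
  have h1 := Y.colLen_anti j b hj
  have h2 := Y.colLen_anti 0 j (Nat.zero_le _)
  rw [colLen_b Y a b ha hb] at h1
  rw [ha] at h2
  omega

lemma colLen_erased_b (ha : Y.colLen 0 = a + 1) (hb : Y.rowLen a = b + 1) :
    (erased Y a b ha hb).colLen b = a := by
  apply colLen_eq
  intro i
  rw [mem_erased]
  constructor
  · rintro ⟨h1, h2⟩
    rw [YoungDiagram.mem_iff_lt_colLen, colLen_b Y a b ha hb] at h1
    simp [Prod.ext_iff] at h2
    omega
  · intro hi
    exact ⟨by rw [YoungDiagram.mem_iff_lt_colLen, colLen_b Y a b ha hb]; omega,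
      by simp [Prod.ext_iff]; omega⟩

lemma colLen_erased_zero_le (ha : Y.colLen 0 = a + 1) (hb : Y.rowLen a = b + 1) :
    (erased Y a b ha hb).colLen 0 ≤ a + 1 := by
  rcases Nat.eq_zero_or_pos ((erased Y a b ha hb).colLen 0) with h | h
  · omega
  · have hm : (((erased Y a b ha hb).colLen 0) - 1, 0) ∈ erased Y a b ha hb := by
      rw [YoungDiagram.mem_iff_lt_colLen]; omega
    rw [mem_erased] at hm
    have := YoungDiagram.mem_iff_lt_colLen.mp hm.1
    omega

lemma rowLen_anti_b (hb : Y.rowLen a = b + 1) {i : ℕ} (hi : i ≤ a) :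
    b + 1 ≤ Y.rowLen i := by
  rw [← hb]; exact Y.rowLen_anti i a hi

end Erased


lemma tele_down_mono (A c : ℤ) (m : ℕ) :
    ∑ j ∈ Finset.range m, (mono A (c - j) - mono A (c - j + 1))
      = mono A (c - m + 1) - mono A (c + 1) := by
  simpa using tele_down (fun t => mono A t) c m

lemma tele_up_mono (A c : ℤ) (m : ℕ) :
    ∑ j ∈ Finset.range m, (mono A (c + j) - mono A (c + j + 1))
      = mono A c - mono A (c + m) := by
  simpa using tele_up (fun t => mono A t) c m

lemma tele_down_mono' (q c : ℤ) (m : ℕ) :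
    ∑ i ∈ Finset.range m, (mono (c - i) q - mono (c - i + 1) q)
      = mono (c - m + 1) q - mono (c + 1) q := by
  simpa using tele_down (fun t => mono t q) c m

lemma tele_up_mono' (q c : ℤ) (m : ℕ) :
    ∑ i ∈ Finset.range m, (mono (c + i) q - mono (c + i + 1) q)
      = mono c q - mono (c + m) q := by
  simpa using tele_up (fun t => mono t q) c m

lemma row_mul_y (A c : ℤ) (m : ℕ) :
    (∑ j ∈ Finset.range m, mono A (c - j)) * (1 - mono 0 1)
      = mono A (c - m + 1) - mono A (c + 1) := by
  rw [Finset.sum_mul, ← tele_down_mono A c m]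
  refine Finset.sum_congr rfl fun j _ => ?_
  rw [mul_sub, mul_one, mono_mul]
  exact congrArg₂ (· - ·) rfl (mono_congr (by ring) rfl)

lemma rowQP (A c : ℤ) (m : ℕ) :
    (∑ j ∈ Finset.range m, mono A (c - j)) * ((1 - mono 1 0) * (1 - mono 0 1))
      = mono A (c + 1 - m) - mono A (c + 1)
        - mono (A + 1) (c + 1 - m) + mono (A + 1) (c + 1) := by
  have h := row_mul_y A c m
  have e0 : mono A (c - m + 1) = mono A (c + 1 - m) := mono_congr rfl (by ring)
  have e1 : mono A (c - m + 1) * mono 1 0 = mono (A + 1) (c + 1 - m) := by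
    rw [mono_mul]; exact mono_congr rfl (by ring)
  have e2 : mono A (c + 1) * mono 1 0 = mono (A + 1) (c + 1) := by
    rw [mono_mul]; exact mono_congr rfl (by ring)
  linear_combination (1 - mono 1 0) * h + e0 - e1 + e2

lemma eval_QP (Y : YoungDiagram) (a b : ℕ) (ha : Y.colLen 0 = a + 1)
    (hb : Y.rowLen a = b + 1) :
    charV (erased Y a b ha hb) * mono a b * ((1 - mono 1 0) * (1 - mono 0 1))
      = ∑ i ∈ Finset.range (a + 1),
          (mono ((a : ℤ) - i) ((b : ℤ) + 1 - ((erased Y a b ha hb).rowLen i : ℤ))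
           - mono ((a : ℤ) - i) ((b : ℤ) + 1)
           - mono ((a : ℤ) - i + 1) ((b : ℤ) + 1 - ((erased Y a b ha hb).rowLen i : ℤ))
           + mono ((a : ℤ) - i + 1) ((b : ℤ) + 1)) := by
  rw [charV, sum_cells (erased Y a b ha hb) (colLen_erased_zero_le Y a b ha hb),
    Finset.sum_mul, Finset.sum_mul]
  refine Finset.sum_congr rfl fun i _ => ?_
  have h1 : (∑ j ∈ Finset.range ((erased Y a b ha hb).rowLen i),
        mono (-(i : ℤ)) (-(j : ℤ))) * mono a b
      = ∑ j ∈ Finset.range ((erased Y a b ha hb).rowLen i),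
          mono ((a : ℤ) - i) ((b : ℤ) - j) := by
    rw [Finset.sum_mul]
    refine Finset.sum_congr rfl fun j _ => ?_
    rw [mono_mul]; exact mono_congr (by ring) (by ring)
  rw [h1, rowQP]

lemma eval_SQP (Y : YoungDiagram) (a b : ℕ) (ha : Y.colLen 0 = a + 1)
    (hb : Y.rowLen a = b + 1) :
    mono (-(a : ℤ)) (-(b : ℤ)) * star2 (charV (erased Y a b ha hb))
        * ((1 - mono 1 0) * (1 - mono 0 1))
      = ∑ i ∈ Finset.range (a + 1),
          (mono ((i : ℤ) - a + 1) (((erased Y a b ha hb).rowLen i : ℤ) - b)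
           - mono ((i : ℤ) - a + 1) (-(b : ℤ))
           - mono ((i : ℤ) - a) (((erased Y a b ha hb).rowLen i : ℤ) - b)
           + mono ((i : ℤ) - a) (-(b : ℤ))) := by
  have hP : mono 1 1 * ((1 - mono (-1 : ℤ) 0) * (1 - mono 0 (-1 : ℤ)))
      = (1 - mono 1 0) * (1 - mono 0 1) := by
    have e1 : mono 1 1 * mono (-1) 0 = mono 0 1 := by
      rw [mono_mul]; exact mono_congr (by ring) (by ring)
    have e2 : mono 1 1 * mono 0 (-1) = mono 1 0 := by
      rw [mono_mul]; exact mono_congr (by ring) (by ring)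
    have e3 : mono 1 1 * (mono (-1) 0 * mono 0 (-1)) = 1 := by
      rw [mono_mul, mono_mul, ← mono_zero]; exact mono_congr (by ring) (by ring)
    have e4 : mono 1 0 * mono 0 1 = mono 1 1 := by
      rw [mono_mul]; exact mono_congr (by ring) (by ring)
    linear_combination -e1 - e2 + e3 - e4
  have key : mono (-(a : ℤ)) (-(b : ℤ)) * star2 (charV (erased Y a b ha hb))
        * ((1 - mono 1 0) * (1 - mono 0 1))
      = mono 1 1 * star2 (charV (erased Y a b ha hb) * mono a b
          * ((1 - mono 1 0) * (1 - mono 0 1))) := by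
    rw [star2_mul, star2_mul, star2_mul, star2_sub, star2_sub, star2_one,
      star2_mono, star2_mono, star2_mono]
    norm_num
    linear_combination -(star2 (charV (erased Y a b ha hb)) * mono (-(a : ℤ)) (-(b : ℤ))) * hP
  rw [key, eval_QP Y a b ha hb, star2_sum, Finset.mul_sum]
  refine Finset.sum_congr rfl fun i _ => ?_
  rw [star2_add, star2_sub, star2_sub, star2_mono, star2_mono, star2_mono, star2_mono]
  have f1 : mono 1 1 * mono (-((a : ℤ) - i)) (-((b : ℤ) + 1 - ((erased Y a b ha hb).rowLen i : ℤ)))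
      = mono ((i : ℤ) - a + 1) (((erased Y a b ha hb).rowLen i : ℤ) - b) := by
    rw [mono_mul]; exact mono_congr (by ring) (by ring)
  have f2 : mono 1 1 * mono (-((a : ℤ) - i)) (-((b : ℤ) + 1))
      = mono ((i : ℤ) - a + 1) (-(b : ℤ)) := by
    rw [mono_mul]; exact mono_congr (by ring) (by ring)
  have f3 : mono 1 1 * mono (-((a : ℤ) - i + 1)) (-((b : ℤ) + 1 - ((erased Y a b ha hb).rowLen i : ℤ)))
      = mono ((i : ℤ) - a) (((erased Y a b ha hb).rowLen i : ℤ) - b) := by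
    rw [mono_mul]; exact mono_congr (by ring) (by ring)
  have f4 : mono 1 1 * mono (-((a : ℤ) - i + 1)) (-((b : ℤ) + 1))
      = mono ((i : ℤ) - a) (-(b : ℤ)) := by
    rw [mono_mul]; exact mono_congr (by ring) (by ring)
  linear_combination f1 - f2 - f3 + f4

lemma final_alg (a b : ℕ) (L : ℕ → ℤ) (hLa : L a = b) :
    mono (-(a : ℤ)) (-(b : ℤ)) + mono ((a : ℤ) + 1) ((b : ℤ) + 1)
      - (1 - mono 1 0) * (1 - mono 0 1)
      - (∑ i ∈ Finset.range (a + 1),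
          (mono ((a : ℤ) - i) ((b : ℤ) + 1 - L i) - mono ((a : ℤ) - i) ((b : ℤ) + 1)
           - mono ((a : ℤ) - i + 1) ((b : ℤ) + 1 - L i) + mono ((a : ℤ) - i + 1) ((b : ℤ) + 1)))
      - (∑ i ∈ Finset.range (a + 1),
          (mono ((i : ℤ) - a + 1) (L i - (b : ℤ)) - mono ((i : ℤ) - a + 1) (-(b : ℤ))
           - mono ((i : ℤ) - a) (L i - (b : ℤ)) + mono ((i : ℤ) - a) (-(b : ℤ))))
    = mono 0 1 + mono 1 0
      + (∑ j ∈ Finset.range b,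
          (mono 0 ((b : ℤ) - j + 1) + mono 1 ((j : ℤ) - b)
           - mono 0 ((b : ℤ) - j) - mono 1 ((j : ℤ) - b + 1)))
      + (∑ i ∈ Finset.range a,
          (mono ((i : ℤ) - a) (L i - (b : ℤ)) + mono ((a : ℤ) - i + 1) ((b : ℤ) + 1 - L i)
           - mono ((i : ℤ) - a + 1) (L i - (b : ℤ)) - mono ((a : ℤ) - i) ((b : ℤ) + 1 - L i))) := by
  rw [Finset.sum_range_succ, Finset.sum_range_succ, hLa]
  rw [show (a : ℤ) - a + 1 = 1 by ring, show (a : ℤ) - (a : ℕ) = 0 from sub_self _,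
    show (b : ℤ) + 1 - b = 1 by ring, show (b : ℤ) - (b : ℕ) = 0 from sub_self _]
  have hB : (∑ i ∈ Finset.range a, mono ((a : ℤ) - i) ((b : ℤ) + 1))
      - (∑ i ∈ Finset.range a, mono ((a : ℤ) - i + 1) ((b : ℤ) + 1))
      = mono 1 ((b : ℤ) + 1) - mono ((a : ℤ) + 1) ((b : ℤ) + 1) := by
    rw [← Finset.sum_sub_distrib]
    have h := tele_down_mono' ((b : ℤ) + 1) a a
    rw [show (a : ℤ) - a + 1 = 1 by ring] at h
    exact h
  have hG : (∑ i ∈ Finset.range a, mono ((i : ℤ) - a) (-(b : ℤ)))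
      - (∑ i ∈ Finset.range a, mono ((i : ℤ) - a + 1) (-(b : ℤ)))
      = mono (-(a : ℤ)) (-(b : ℤ)) - mono 0 (-(b : ℤ)) := by
    rw [← Finset.sum_sub_distrib]
    have h := tele_up_mono' (-(b : ℤ)) (-(a : ℤ)) a
    rw [show -(a : ℤ) + a = 0 by ring] at h
    rw [← h]
    refine Finset.sum_congr rfl fun i _ => ?_
    exact congrArg₂ (· - ·) (mono_congr (by ring) rfl) (mono_congr (by ring) rfl)
  have hR1 : (∑ j ∈ Finset.range b, mono 0 ((b : ℤ) - j + 1))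
      - (∑ j ∈ Finset.range b, mono 0 ((b : ℤ) - j))
      = mono 0 ((b : ℤ) + 1) - mono 0 1 := by
    have h := tele_down_mono 0 (b : ℤ) b
    rw [show (b : ℤ) - b + 1 = 1 by ring, Finset.sum_sub_distrib] at h
    linear_combination -h
  have hR2 : (∑ j ∈ Finset.range b, mono 1 ((j : ℤ) - b))
      - (∑ j ∈ Finset.range b, mono 1 ((j : ℤ) - b + 1))
      = mono 1 (-(b : ℤ)) - mono 1 0 := by
    rw [← Finset.sum_sub_distrib]
    have h := tele_up_mono 1 (-(b : ℤ)) b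
    rw [show -(b : ℤ) + b = 0 by ring] at h
    rw [← h]
    refine Finset.sum_congr rfl fun j _ => ?_
    exact congrArg₂ (· - ·) (mono_congr rfl (by ring)) (mono_congr rfl (by ring))
  have e4 : mono 1 0 * mono 0 1 = mono 1 1 := by
    rw [mono_mul]; exact mono_congr (by ring) (by ring)
  simp only [Finset.sum_add_distrib, Finset.sum_sub_distrib, mono_zero]
  linear_combination hB - hG - hR1 - hR2 - e4

lemma RHS_step (Y : YoungDiagram) (a b : ℕ) (ha : Y.colLen 0 = a + 1)
    (hb : Y.rowLen a = b + 1) :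
    (∑ c ∈ Y.cells, (mono (-(legLen Y c : ℤ)) ((armLen Y c : ℤ) + 1)
        + mono ((legLen Y c : ℤ) + 1) (-(armLen Y c : ℤ))))
      = (∑ c ∈ (erased Y a b ha hb).cells,
          (mono (-(legLen (erased Y a b ha hb) c : ℤ)) ((armLen (erased Y a b ha hb) c : ℤ) + 1)
            + mono ((legLen (erased Y a b ha hb) c : ℤ) + 1)
                (-(armLen (erased Y a b ha hb) c : ℤ))))
        + (mono 0 1 + mono 1 0)
        + (∑ j ∈ Finset.range b, (mono 0 ((b : ℤ) - j + 1) + mono 1 ((j : ℤ) - b)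
            - mono 0 ((b : ℤ) - j) - mono 1 ((j : ℤ) - b + 1)))
        + (∑ i ∈ Finset.range a,
            (mono ((i : ℤ) - a) (((erased Y a b ha hb).rowLen i : ℤ) - b)
             + mono ((a : ℤ) - i + 1) ((b : ℤ) + 1 - ((erased Y a b ha hb).rowLen i : ℤ))
             - mono ((i : ℤ) - a + 1) (((erased Y a b ha hb).rowLen i : ℤ) - b)
             - mono ((a : ℤ) - i) ((b : ℤ) + 1 - ((erased Y a b ha hb).rowLen i : ℤ)))) := by
  set Y' := erased Y a b ha hb with hY'
  set F : ℕ × ℕ → Laurent2 := fun c => mono (-(legLen Y c : ℤ)) ((armLen Y c : ℤ) + 1)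
      + mono ((legLen Y c : ℤ) + 1) (-(armLen Y c : ℤ)) with hF
  set F' : ℕ × ℕ → Laurent2 := fun c => mono (-(legLen Y' c : ℤ)) ((armLen Y' c : ℤ) + 1)
      + mono ((legLen Y' c : ℤ) + 1) (-(armLen Y' c : ℤ)) with hF'
  have hcells : Y.cells = insert (a, b) Y'.cells := by
    rw [hY', cells_erased, Finset.insert_erase]
    exact (YoungDiagram.mem_cells _).mpr (mem_ab Y a b hb)
  have hnot : (a, b) ∉ Y'.cells := by rw [hY', cells_erased]; exact Finset.notMem_erase _ _
  rw [hcells, Finset.sum_insert hnot]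
  -- the corner contributes `mono 0 1 + mono 1 0`
  have harm : armLen Y (a, b) = 0 := by simp [armLen, hb]
  have hleg : legLen Y (a, b) = 0 := by simp [legLen, colLen_b Y a b ha hb]
  have hcorner : F (a, b) = mono 0 1 + mono 1 0 := by
    rw [hF]; simp only [harm, hleg]; norm_num
  -- difference sum
  have hdiff : ∑ c ∈ Y'.cells, (F c - F' c)
      = (∑ j ∈ Finset.range b, (mono 0 ((b : ℤ) - j + 1) + mono 1 ((j : ℤ) - b)
            - mono 0 ((b : ℤ) - j) - mono 1 ((j : ℤ) - b + 1)))
        + (∑ i ∈ Finset.range a,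
            (mono ((i : ℤ) - a) ((Y'.rowLen i : ℤ) - b)
             + mono ((a : ℤ) - i + 1) ((b : ℤ) + 1 - (Y'.rowLen i : ℤ))
             - mono ((i : ℤ) - a + 1) ((Y'.rowLen i : ℤ) - b)
             - mono ((a : ℤ) - i) ((b : ℤ) + 1 - (Y'.rowLen i : ℤ)))) := by
    rw [← Finset.sum_filter_add_sum_filter_not Y'.cells (fun c => c.2 = b)]
    have hcolset : Y'.cells.filter (fun c => c.2 = b) = (Finset.range a).image (fun i => (i, b)) := by
      ext ⟨i, j⟩
      simp only [Finset.mem_filter, Finset.mem_image, Finset.mem_range,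
        YoungDiagram.mem_cells]
      constructor
      · rintro ⟨hm, rfl⟩
        have := YoungDiagram.mem_iff_lt_colLen.mp hm
        rw [hY', colLen_erased_b] at this
        exact ⟨i, this, rfl⟩
      · rintro ⟨k, hk, heq⟩
        obtain ⟨rfl, rfl⟩ : k = i ∧ b = j := by
          constructor <;> [exact congrArg Prod.fst heq; exact congrArg Prod.snd heq]
        refine ⟨YoungDiagram.mem_iff_lt_colLen.mpr ?_, rfl⟩
        rw [hY', colLen_erased_b]; exact hk
    have hrowset : (Y'.cells.filter (fun c => ¬ c.2 = b)).filter (fun c => c.1 = a)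
        = (Finset.range b).image (fun j => (a, j)) := by
      ext ⟨i, j⟩
      simp only [Finset.mem_filter, Finset.mem_image, Finset.mem_range,
        YoungDiagram.mem_cells]
      constructor
      · rintro ⟨⟨hm, hne⟩, rfl⟩
        have := YoungDiagram.mem_iff_lt_rowLen.mp hm
        rw [hY', rowLen_erased_a] at this
        exact ⟨j, this, rfl⟩
      · rintro ⟨k, hk, heq⟩
        obtain ⟨rfl, rfl⟩ : a = i ∧ k = j := by
          constructor <;> [exact congrArg Prod.fst heq; exact congrArg Prod.snd heq]
        refine ⟨⟨YoungDiagram.mem_iff_lt_rowLen.mpr ?_, by omega⟩, rfl⟩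
        rw [hY', rowLen_erased_a]; exact hk
    rw [← Finset.sum_filter_add_sum_filter_not (Y'.cells.filter (fun c => ¬ c.2 = b))
      (fun c => c.1 = a)]
    have hrest : ∑ c ∈ (Y'.cells.filter (fun c => ¬ c.2 = b)).filter (fun c => ¬ c.1 = a),
        (F c - F' c) = 0 := by
      apply Finset.sum_eq_zero
      intro c hc
      simp only [Finset.mem_filter] at hc
      obtain ⟨⟨_, hne2⟩, hne1⟩ := hc
      have e1 : armLen Y' c = armLen Y c := by
        simp [armLen, hY', rowLen_erased_ne Y a b ha hb hne1]
      have e2 : legLen Y' c = legLen Y c := by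
        simp [legLen, hY', colLen_erased_ne Y a b ha hb hne2]
      rw [hF, hF']; simp only [e1, e2, sub_self]
    rw [hrest, add_zero, hcolset, hrowset, Finset.sum_image (by intro x _ y _ h; simpa using h),
      Finset.sum_image (by intro x _ y _ h; simpa using h)]
    rw [add_comm]
    congr 1
    · -- row a cells
      refine Finset.sum_congr rfl fun j hj => ?_
      have hjb : j < b := Finset.mem_range.mp hj
      have l1 : legLen Y (a, j) = 0 := by
        simp [legLen, colLen_le_b Y a b ha hb (le_of_lt hjb)]
      have l2 : legLen Y' (a, j) = 0 := by
        simp [legLen, hY', colLen_erased_ne Y a b ha hb (by omega : j ≠ b),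
          colLen_le_b Y a b ha hb (le_of_lt hjb)]
      have a1 : armLen Y (a, j) = b - j := by simp [armLen, hb]; omega
      have a2 : armLen Y' (a, j) = b - j - 1 := by
        simp [armLen, hY', rowLen_erased_a]
      rw [hF, hF']; simp only [l1, l2, a1, a2]
      rw [show mono (-((0 : ℕ) : ℤ)) (((b - j : ℕ) : ℤ) + 1) = mono 0 ((b : ℤ) - j + 1) from
          mono_congr (by omega) (by omega),
        show mono (((0 : ℕ) : ℤ) + 1) (-((b - j : ℕ) : ℤ)) = mono 1 ((j : ℤ) - b) from
          mono_congr (by omega) (by omega),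
        show mono (-((0 : ℕ) : ℤ)) (((b - j - 1 : ℕ) : ℤ) + 1) = mono 0 ((b : ℤ) - j) from
          mono_congr (by omega) (by omega),
        show mono (((0 : ℕ) : ℤ) + 1) (-((b - j - 1 : ℕ) : ℤ)) = mono 1 ((j : ℤ) - b + 1) from
          mono_congr (by omega) (by omega)]
      ring
    · -- column b cells
      refine Finset.sum_congr rfl fun i hi => ?_
      have hia : i < a := Finset.mem_range.mp hi
      have hri : Y'.rowLen i = Y.rowLen i := rowLen_erased_ne Y a b ha hb (by omega)
      have hbl : b + 1 ≤ Y.rowLen i := rowLen_anti_b Y a b hb (by omega)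
      have l1 : legLen Y (i, b) = a - i := by
        simp [legLen, colLen_b Y a b ha hb]; omega
      have l2 : legLen Y' (i, b) = a - i - 1 := by
        simp [legLen, hY', colLen_erased_b]
      have a1 : armLen Y (i, b) = Y.rowLen i - b - 1 := by simp [armLen]
      have a2 : armLen Y' (i, b) = Y.rowLen i - b - 1 := by simp [armLen, hri]
      rw [hF, hF']; simp only [l1, l2, a1, a2]
      rw [show mono (-((a - i : ℕ) : ℤ)) (((Y.rowLen i - b - 1 : ℕ) : ℤ) + 1)
            = mono ((i : ℤ) - a) ((Y'.rowLen i : ℤ) - b) from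
          mono_congr (by omega) (by rw [hri]; omega),
        show mono (((a - i : ℕ) : ℤ) + 1) (-((Y.rowLen i - b - 1 : ℕ) : ℤ))
            = mono ((a : ℤ) - i + 1) ((b : ℤ) + 1 - (Y'.rowLen i : ℤ)) from
          mono_congr (by omega) (by rw [hri]; omega),
        show mono (-((a - i - 1 : ℕ) : ℤ)) (((Y.rowLen i - b - 1 : ℕ) : ℤ) + 1)
            = mono ((i : ℤ) - a + 1) ((Y'.rowLen i : ℤ) - b) from
          mono_congr (by omega) (by rw [hri]; omega),
        show mono (((a - i - 1 : ℕ) : ℤ) + 1) (-((Y.rowLen i - b - 1 : ℕ) : ℤ))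
            = mono ((a : ℤ) - i) ((b : ℤ) + 1 - (Y'.rowLen i : ℤ)) from
          mono_congr (by omega) (by rw [hri]; omega)]
      ring
  have hFF : ∑ c ∈ Y'.cells, F c = ∑ c ∈ Y'.cells, F' c + ∑ c ∈ Y'.cells, (F c - F' c) := by
    rw [← Finset.sum_add_distrib]
    refine Finset.sum_congr rfl fun c _ => by ring
  rw [hFF, hdiff]
  simp only [harm, hleg]
  rw [show mono (-((0 : ℕ) : ℤ)) (((0 : ℕ) : ℤ) + 1) = mono 0 1 from
      mono_congr (by norm_num) (by norm_num),
    show mono (((0 : ℕ) : ℤ) + 1) (-((0 : ℕ) : ℤ)) = mono 1 0 from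
      mono_congr (by norm_num) (by norm_num)]
  ring

theorem tangent_aux : ∀ (n : ℕ) (Y : YoungDiagram), Y.cells.card = n →
    charV Y + star2 (charV Y) * mono 1 1
        - charV Y * star2 (charV Y) * (1 - mono 1 0) * (1 - mono 0 1) =
      (∑ c ∈ Y.cells, mono (-(legLen Y c : ℤ)) ((armLen Y c : ℤ) + 1)) +
        ∑ c ∈ Y.cells, mono ((legLen Y c : ℤ) + 1) (-(armLen Y c : ℤ)) := by
  intro n
  induction n with
  | zero =>
    intro Y h
    have hY : Y.cells = ∅ := Finset.card_eq_zero.mp h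
    simp [charV, hY, star2_zero]
  | succ n ih =>
    intro Y hcard
    obtain ⟨c0, hc0⟩ : Y.cells.Nonempty := Finset.card_pos.mp (by omega)
    have h00 : (0, 0) ∈ Y :=
      Y.up_left_mem (Nat.zero_le _) (Nat.zero_le _)
        (show (c0.1, c0.2) ∈ Y from (YoungDiagram.mem_cells _).mp hc0)
    have hcol0pos : 0 < Y.colLen 0 := YoungDiagram.mem_iff_lt_colLen.mp h00
    have ha : Y.colLen 0 = (Y.colLen 0 - 1) + 1 := by omega
    set a := Y.colLen 0 - 1 with hadef
    have hrowpos : 0 < Y.rowLen a := by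
      have : (a, 0) ∈ Y := YoungDiagram.mem_iff_lt_colLen.mpr (by omega)
      exact YoungDiagram.mem_iff_lt_rowLen.mp this
    have hb : Y.rowLen a = (Y.rowLen a - 1) + 1 := by omega
    set b := Y.rowLen a - 1 with hbdef
    have hcard' : (erased Y a b ha hb).cells.card = n := by
      rw [cells_erased,
        Finset.card_erase_of_mem ((YoungDiagram.mem_cells _).mpr (mem_ab Y a b hb))]
      omega
    have IH := ih (erased Y a b ha hb) hcard'
    have hcells : Y.cells = insert (a, b) (erased Y a b ha hb).cells := by
      rw [cells_erased, Finset.insert_erase]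
      exact (YoungDiagram.mem_cells _).mpr (mem_ab Y a b hb)
    have hnot : (a, b) ∉ (erased Y a b ha hb).cells := by
      rw [cells_erased]; exact Finset.notMem_erase _ _
    have hV : charV Y = charV (erased Y a b ha hb) + mono (-(a : ℤ)) (-(b : ℤ)) := by
      rw [charV, charV, hcells, Finset.sum_insert hnot]
      exact add_comm _ _
    have hstar : star2 (charV Y) = star2 (charV (erased Y a b ha hb)) + mono (a : ℤ) (b : ℤ) := by
      rw [hV, star2_add, star2_mono]; norm_num
    have hμν : mono (-(a : ℤ)) (-(b : ℤ)) * mono (a : ℤ) (b : ℤ) = 1 := by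
      rw [mono_mul, show -(a : ℤ) + a = 0 by ring, show -(b : ℤ) + b = 0 by ring, mono_zero]
    have hνm : mono (a : ℤ) (b : ℤ) * mono 1 1 = mono ((a : ℤ) + 1) ((b : ℤ) + 1) := by
      rw [mono_mul]
    have hQ := eval_QP Y a b ha hb
    have hS := eval_SQP Y a b ha hb
    have hFA := final_alg a b (fun i => ((erased Y a b ha hb).rowLen i : ℤ))
      (by rw [rowLen_erased_a Y a b ha hb])
    have hRS := RHS_step Y a b ha hb
    rw [Finset.sum_add_distrib, Finset.sum_add_distrib] at hRS
    rw [hstar, hV]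
    linear_combination IH + hFA + hνm
      - ((1 - mono 1 0) * (1 - mono 0 1)) * hμν - hQ - hS - hRS

/-- **Tangent space character of the Hilbert scheme of points at a monomial
ideal fixed point.**  For `V = ∑_{(i,j)∈Y} u₁^{-i}u₂^{-j}`,
`T(V) = V + V* u₁u₂ − V V* (1−u₁)(1−u₂)
      = ∑_{□∈Y} u₁^{-l(□)} u₂^{a(□)+1} + ∑_{□∈Y} u₁^{l(□)+1} u₂^{-a(□)}`. -/
theorem tangent_character_hilbert_scheme (Y : YoungDiagram) :
    charV Y + star2 (charV Y) * mono 1 1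
        - charV Y * star2 (charV Y) * (1 - mono 1 0) * (1 - mono 0 1) =
      (∑ c ∈ Y.cells, mono (-(legLen Y c : ℤ)) ((armLen Y c : ℤ) + 1)) +
        ∑ c ∈ Y.cells, mono ((legLen Y c : ℤ) + 1) (-(armLen Y c : ℤ)) :=
  tangent_aux Y.cells.card Y rfl
end

section
/- Torus fixed points of the Hilbert scheme of n points on ℂ² biject with partitions of n: a rank-1 stable ADHM datum (X, Y, I) with J = 0 fixed under the torus action (X,Y) ↦ (aX, bY) (up to GL_n conjugation) corresponds uniquely to a monomial ideal of colength n in ℂ[x,y], equivalently a Young diagram with n boxes; moreover ℂ^n decomposes as ⊕_{(i,j)∈Y} ℂ·e_{i,j} with X e_{i,j} = e_{i+1,j}, Y e_{i,j} = e_{i,j+1} (with e_{i,j} = 0 outside Y) and I(1) = e_{0,0}. -/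
/-- Rank-one ADHM data on `ℂⁿ` (with `J = 0`): a pair of endomorphisms
`X, Y` and a framing vector `I(1) ∈ ℂⁿ`. -/
abbrev ADHMRep (n : ℕ) : Type :=
  ((Fin n → ℂ) →ₗ[ℂ] (Fin n → ℂ)) × ((Fin n → ℂ) →ₗ[ℂ] (Fin n → ℂ)) × (Fin n → ℂ)

/-- The ADHM equation `[X,Y] = 0` together with the stability condition
`ℂ⟨X,Y⟩ Im(I) = ℂⁿ`. -/
def IsStableADHM {n : ℕ} (d : ADHMRep n) : Prop :=
  d.1 ∘ₗ d.2.1 = d.2.1 ∘ₗ d.1 ∧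
    ∀ W : Submodule ℂ (Fin n → ℂ), d.2.2 ∈ W →
      (∀ v ∈ W, d.1 v ∈ W) → (∀ v ∈ W, d.2.1 v ∈ W) → W = ⊤

/-- The `GL_n`-conjugation relation on ADHM data. -/
def adhmRel (n : ℕ) : ADHMRep n → ADHMRep n → Prop := fun x y =>
  ∃ g : (Fin n → ℂ) ≃ₗ[ℂ] (Fin n → ℂ),
    y.1 = g.toLinearMap ∘ₗ x.1 ∘ₗ g.symm.toLinearMap ∧
      y.2.1 = g.toLinearMap ∘ₗ x.2.1 ∘ₗ g.symm.toLinearMap ∧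
      y.2.2 = g x.2.2

/-- The space of `GL_n`-orbits of rank-one ADHM data (the ambient set in
which the Hilbert scheme `Hilbⁿ(ℂ²)` sits as the stable locus). -/
abbrev ADHMModuli (n : ℕ) : Type := Quot (adhmRel n)

/-- The action of the two-torus: `(X, Y, I) ↦ (aX, bY, I)`. -/
noncomputable def scaleADHM {n : ℕ} (a b : ℂˣ) (x : ADHMRep n) : ADHMRep n :=
  ((a : ℂ) • x.1, (b : ℂ) • x.2.1, x.2.2)

/-- An orbit consisting of stable data. -/
def IsStableClass {n : ℕ} (c : ADHMModuli n) : Prop :=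
  ∃ x, IsStableADHM x ∧ Quot.mk (adhmRel n) x = c

/-- An orbit fixed by the two-torus action. -/
def IsFixedClass {n : ℕ} (c : ADHMModuli n) : Prop :=
  ∀ (a b : ℂˣ) (x : ADHMRep n), Quot.mk (adhmRel n) x = c →
    Quot.mk (adhmRel n) (scaleADHM a b x) = c

/-- The canonical operator `X` attached to a Young diagram `Y`:
`X e_{(i,j)} = e_{(i+1,j)}` (and `0` if `(i+1,j) ∉ Y`). -/
noncomputable def youngX (Y : YoungDiagram) : (↥Y.cells → ℂ) →ₗ[ℂ] (↥Y.cells → ℂ) :=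
  Matrix.mulVecLin (Matrix.of fun t s : ↥Y.cells =>
    if (t : ℕ × ℕ).1 = (s : ℕ × ℕ).1 + 1 ∧ (t : ℕ × ℕ).2 = (s : ℕ × ℕ).2 then 1 else 0)

/-- The canonical operator `Y`: `Y e_{(i,j)} = e_{(i,j+1)}`. -/
noncomputable def youngY (Y : YoungDiagram) : (↥Y.cells → ℂ) →ₗ[ℂ] (↥Y.cells → ℂ) :=
  Matrix.mulVecLin (Matrix.of fun t s : ↥Y.cells =>
    if (t : ℕ × ℕ).1 = (s : ℕ × ℕ).1 ∧ (t : ℕ × ℕ).2 = (s : ℕ × ℕ).2 + 1 then 1 else 0)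

/-- The canonical framing vector: `I(1) = e_{(0,0)}`. -/
noncomputable def youngI (Y : YoungDiagram) : ↥Y.cells → ℂ :=
  fun c => if (c : ℕ × ℕ) = (0, 0) then 1 else 0

lemma adhmRel_equivalence (n : ℕ) : Equivalence (adhmRel n) := by
  constructor
  · intro x
    exact ⟨LinearEquiv.refl ℂ _, by ext v <;> simp, by ext v <;> simp, by simp⟩
  · rintro x y ⟨g, h1, h2, h3⟩
    refine ⟨g.symm, ?_, ?_, ?_⟩
    · rw [h1]; ext v; simp
    · rw [h2]; ext v; simp
    · rw [h3]; simp
  · rintro x y z ⟨g, h1, h2, h3⟩ ⟨k, k1, k2, k3⟩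
    refine ⟨g.trans k, ?_, ?_, ?_⟩
    · rw [k1, h1]; ext v; simp
    · rw [k2, h2]; ext v; simp
    · rw [k3, h3]; simp

lemma quot_mk_eq_iff {n : ℕ} (x y : ADHMRep n) :
    Quot.mk (adhmRel n) x = Quot.mk (adhmRel n) y ↔ adhmRel n x y := by
  rw [Quot.eq]
  exact (adhmRel_equivalence n).eqvGen_iff

lemma scale_rel {n : ℕ} (a b : ℂˣ) {x y : ADHMRep n} (h : adhmRel n x y) :
    adhmRel n (scaleADHM a b x) (scaleADHM a b y) := by
  obtain ⟨g, h1, h2, h3⟩ := h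
  refine ⟨g, ?_, ?_, h3⟩
  · show (a : ℂ) • y.1 = _
    rw [h1]; ext v; simp [scaleADHM]
  · show (b : ℂ) • y.2.1 = _
    rw [h2]; ext v; simp [scaleADHM]

section transport
variable {n : ℕ} {W : Type*} [AddCommGroup W] [Module ℂ W]

/-- Transport of a triple of data along a linear equivalence. -/
noncomputable def transportADHM (e : W ≃ₗ[ℂ] (Fin n → ℂ))
    (A B : W →ₗ[ℂ] W) (c : W) : ADHMRep n :=
  (e.toLinearMap ∘ₗ A ∘ₗ e.symm.toLinearMap,
   e.toLinearMap ∘ₗ B ∘ₗ e.symm.toLinearMap, e c)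

lemma transport_rel (e f : W ≃ₗ[ℂ] (Fin n → ℂ)) (A B : W →ₗ[ℂ] W) (c : W) :
    adhmRel n (transportADHM e A B c) (transportADHM f A B c) := by
  refine ⟨e.symm.trans f, ?_, ?_, ?_⟩ <;>
    simp only [transportADHM] <;> [skip; skip; simp]
  · ext v; simp
  · ext v; simp

lemma transport_stable (e : W ≃ₗ[ℂ] (Fin n → ℂ)) (A B : W →ₗ[ℂ] W) (c : W)
    (hAB : A ∘ₗ B = B ∘ₗ A)
    (hst : ∀ U : Submodule ℂ W, c ∈ U → (∀ w ∈ U, A w ∈ U) → (∀ w ∈ U, B w ∈ U) → U = ⊤) :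
    IsStableADHM (transportADHM e A B c) := by
  constructor
  · apply LinearMap.ext
    intro v
    have := LinearMap.congr_fun hAB (e.symm v)
    simp only [LinearMap.comp_apply] at this
    simp only [transportADHM, LinearMap.comp_apply, LinearEquiv.coe_coe,
      LinearEquiv.symm_apply_apply, this]
  · intro U hc hA hB
    have hU : Submodule.comap e.toLinearMap U = ⊤ := by
      apply hst
      · simpa [Submodule.mem_comap, transportADHM] using hc
      · intro w hw
        simp only [Submodule.mem_comap] at hw ⊢
        have := hA (e w) hw
        simpa [transportADHM] using this
      · intro w hw
        simp only [Submodule.mem_comap] at hw ⊢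
        have := hB (e w) hw
        simpa [transportADHM] using this
    rw [Submodule.eq_top_iff']
    intro v
    have : e.symm v ∈ Submodule.comap e.toLinearMap U := hU ▸ Submodule.mem_top
    simpa [Submodule.mem_comap] using this

end transport

open Module

section vvec
variable {M : Type*} [AddCommGroup M] [Module ℂ M]

/-- The vector `X^i Y^j I`. -/
noncomputable def vvec (X Y : Module.End ℂ M) (I : M) (p : ℕ × ℕ) : M :=
  (X ^ p.1) ((Y ^ p.2) I)

lemma vvec_zero (X Y : Module.End ℂ M) (I : M) : vvec X Y I (0, 0) = I := by
  simp [vvec]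

lemma vvec_X (X Y : Module.End ℂ M) (I : M) (i j : ℕ) :
    X (vvec X Y I (i, j)) = vvec X Y I (i + 1, j) := by
  simp [vvec, pow_succ']

lemma vvec_Y {X Y : Module.End ℂ M} (hc : X * Y = Y * X) (I : M) (i j : ℕ) :
    Y (vvec X Y I (i, j)) = vvec X Y I (i, j + 1) := by
  have h : Y * X ^ i = X ^ i * Y :=
    (Commute.pow_right (show Commute Y X from hc.symm) i).eq
  show (Y * X ^ i) ((Y ^ j) I) = _
  rw [h]
  simp [vvec, pow_succ']

lemma vvec_shift {X Y : Module.End ℂ M} (hc : X * Y = Y * X) (I : M) (i j k l : ℕ) :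
    vvec X Y I (i + k, j + l) = (X ^ k) ((Y ^ l) (vvec X Y I (i, j))) := by
  have h2 : Y ^ l * X ^ i = X ^ i * Y ^ l :=
    ((show Commute X Y from hc).pow_pow i l).symm.eq
  show (X ^ (i + k) * Y ^ (j + l)) I = (X ^ k * (Y ^ l * (X ^ i * Y ^ j))) I
  have : X ^ (i + k) * Y ^ (j + l) = X ^ k * Y ^ l * (X ^ i * Y ^ j) := by
    calc X ^ (i + k) * Y ^ (j + l) = (X ^ k * X ^ i) * (Y ^ l * Y ^ j) := by
          rw [← pow_add, ← pow_add, Nat.add_comm i k, Nat.add_comm j l]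
      _ = X ^ k * (Y ^ l * X ^ i) * Y ^ j := by rw [h2]; simp only [mul_assoc]
      _ = X ^ k * Y ^ l * (X ^ i * Y ^ j) := by rw [mul_assoc, mul_assoc, mul_assoc]
  rw [this, mul_assoc]

end vvec

open Polynomial in
lemma poly_vanish (s : Finset ℕ) (d : ℕ → ℂ)
    (h : ∀ a : ℂ, a ≠ 0 → ∑ i ∈ s, d i * a ^ i = 0) : ∀ i ∈ s, d i = 0 := by
  set p : ℂ[X] := ∑ i ∈ s, C (d i) * X ^ i with hp
  have hev : ∀ a : ℂ, p.eval a = ∑ i ∈ s, d i * a ^ i := by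
    intro a; simp [hp, eval_finset_sum]
  have hroots : {x : ℂ | x ≠ 0} ⊆ {x | p.IsRoot x} := by
    intro a ha; simp only [Set.mem_setOf_eq, IsRoot, hev, h a ha]
  have hinf : ({x : ℂ | x ≠ 0}).Infinite := by
    have : ({x : ℂ | x ≠ 0}) = ({0} : Set ℂ)ᶜ := by ext; simp
    rw [this]
    exact Set.Finite.infinite_compl (Set.finite_singleton 0)
  have hp0 : p = 0 := eq_zero_of_infinite_isRoot p (hinf.mono hroots)
  intro i hi
  have : p.coeff i = d i := by
    rw [hp, finset_sum_coeff]
    simp only [coeff_C_mul, coeff_X_pow]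
    rw [Finset.sum_eq_single i]
    · simp
    · intro j _ hji; simp [Ne.symm hji]
    · intro hni; exact absurd hi hni
  rw [← this, hp0, coeff_zero]

lemma poly_vanish2 (T : Finset (ℕ × ℕ)) (w : ℕ × ℕ → ℂ)
    (h : ∀ a b : ℂ, a ≠ 0 → b ≠ 0 → ∑ p ∈ T, w p * (a ^ p.1 * b ^ p.2) = 0) :
    ∀ p ∈ T, w p = 0 := by
  have step1 : ∀ a : ℂ, a ≠ 0 → ∀ j ∈ T.image Prod.snd,
      ∑ p ∈ T.filter (fun p => p.2 = j), w p * a ^ p.1 = 0 := by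
    intro a ha
    apply poly_vanish (T.image Prod.snd)
      (fun j => ∑ p ∈ T.filter (fun p => p.2 = j), w p * a ^ p.1)
    intro b hb
    have := h a b ha hb
    rw [← Finset.sum_fiberwise_of_maps_to (g := fun p : ℕ × ℕ => p.2)
      (fun p hp => Finset.mem_image_of_mem _ hp) (fun p => w p * (a ^ p.1 * b ^ p.2))] at this
    rw [← this]
    apply Finset.sum_congr rfl
    intro j _
    rw [Finset.sum_mul]
    apply Finset.sum_congr rfl
    intro p hp
    have : p.2 = j := (Finset.mem_filter.mp hp).2
    rw [this]; ring
  intro p hp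
  have hj : p.2 ∈ T.image Prod.snd := Finset.mem_image_of_mem _ hp
  have step2 : ∀ i ∈ (T.filter (fun q => q.2 = p.2)).image Prod.fst, w (i, p.2) = 0 := by
    apply poly_vanish _ (fun i => w (i, p.2))
    intro a ha
    rw [Finset.sum_image]
    · have := step1 a ha p.2 hj
      rw [← this]
      apply Finset.sum_congr rfl
      intro q hq
      have h2 : q.2 = p.2 := (Finset.mem_filter.mp hq).2
      congr 1
      · congr 1; exact (Prod.ext rfl h2.symm)
    · intro x hx y hy hxy
      exact Prod.ext hxy ((Finset.mem_filter.mp hx).2.trans ((Finset.mem_filter.mp hy).2).symm)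
  have : w (p.1, p.2) = 0 := step2 p.1 (Finset.mem_image_of_mem _ (Finset.mem_filter.mpr ⟨hp, rfl⟩))
  simpa using this

lemma eigen_vanish {n : ℕ} (T : Finset (ℕ × ℕ)) (w : ℕ × ℕ → (Fin n → ℂ))
    (h : ∀ a b : ℂ, a ≠ 0 → b ≠ 0 → ∑ p ∈ T, (a ^ p.1 * b ^ p.2) • w p = 0) :
    ∀ p ∈ T, w p = 0 := by
  intro p hp
  funext k
  refine poly_vanish2 T (fun p => w p k) ?_ p hp
  intro a b ha hb
  have := congrFun (h a b ha hb) k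
  simpa [Finset.sum_apply, mul_comm] using this

section conj
variable {M M' : Type*} [AddCommGroup M] [Module ℂ M] [AddCommGroup M'] [Module ℂ M']

lemma pow_conj (g : M ≃ₗ[ℂ] M') (A : M →ₗ[ℂ] M) (k : ℕ) (m : M) :
    ((g.toLinearMap ∘ₗ A ∘ₗ g.symm.toLinearMap) ^ k) (g m) = g ((A ^ k) m) := by
  induction k with
  | zero => simp
  | succ k ih =>
    rw [pow_succ', pow_succ']
    simp only [Module.End.mul_apply, LinearMap.comp_apply, LinearEquiv.coe_coe] at ih ⊢
    rw [ih]
    simp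

lemma vvec_conj (g : M ≃ₗ[ℂ] M') (X Y : M →ₗ[ℂ] M) (I : M) (p : ℕ × ℕ) :
    vvec (g.toLinearMap ∘ₗ X ∘ₗ g.symm.toLinearMap)
      (g.toLinearMap ∘ₗ Y ∘ₗ g.symm.toLinearMap) (g I) p = g (vvec X Y I p) := by
  rw [vvec, vvec, ← pow_conj g X p.1 ((Y ^ p.2) I), ← pow_conj g Y p.2 I]

lemma vvec_smul (a b : ℂ) (X Y : M →ₗ[ℂ] M) (I : M) (p : ℕ × ℕ) :
    vvec (a • X) (b • Y) I p = (a ^ p.1 * b ^ p.2) • vvec X Y I p := by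
  rw [vvec, vvec, smul_pow, smul_pow]
  simp [mul_smul, smul_comm (b ^ p.2)]

end conj

section young
open Classical in
/-- The indicator basis vector of a box `q` (zero if `q ∉ D`). -/
noncomputable def cellVec (D : YoungDiagram) (q : ℕ × ℕ) : ↥D.cells → ℂ :=
  if h : q ∈ D.cells then Pi.single (⟨q, h⟩ : ↥D.cells) 1 else 0

variable (D : YoungDiagram)

lemma cellVec_mem {q : ℕ × ℕ} (h : q ∈ D.cells) :
    cellVec D q = Pi.single (⟨q, h⟩ : ↥D.cells) 1 := by
  simp [cellVec, h]

lemma cellVec_not_mem {q : ℕ × ℕ} (h : q ∉ D.cells) : cellVec D q = 0 := by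
  simp [cellVec, h]

lemma cellVec_ne_zero_iff (q : ℕ × ℕ) : cellVec D q ≠ 0 ↔ q ∈ D.cells := by
  constructor
  · intro h
    by_contra hq
    exact h (cellVec_not_mem D hq)
  · intro h
    rw [cellVec_mem D h]
    intro h0
    have := congrFun h0 ⟨q, h⟩
    simp at this

lemma youngX_single (s : ↥D.cells) :
    youngX D (Pi.single s 1) = cellVec D ((s : ℕ × ℕ).1 + 1, (s : ℕ × ℕ).2) := by
  rw [youngX, Matrix.mulVecLin_apply, Matrix.mulVec_single]
  by_cases h : ((s : ℕ × ℕ).1 + 1, (s : ℕ × ℕ).2) ∈ D.cells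
  · rw [cellVec_mem D h]
    funext t
    by_cases ht : t = (⟨_, h⟩ : ↥D.cells)
    · subst ht; simp [Matrix.of_apply]
    · have : ¬((t : ℕ × ℕ).1 = (s : ℕ × ℕ).1 + 1 ∧ (t : ℕ × ℕ).2 = (s : ℕ × ℕ).2) := by
        intro ⟨h1, h2⟩
        exact ht (Subtype.ext (Prod.ext h1 h2))
      simp [Matrix.of_apply, this, Pi.single_eq_of_ne ht]
  · rw [cellVec_not_mem D h]
    funext t
    have : ¬((t : ℕ × ℕ).1 = (s : ℕ × ℕ).1 + 1 ∧ (t : ℕ × ℕ).2 = (s : ℕ × ℕ).2) := by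
      intro ⟨h1, h2⟩
      exact h (by rw [← h1, ← h2]; exact t.2)
    simp [Matrix.of_apply, this]

lemma youngY_single (s : ↥D.cells) :
    youngY D (Pi.single s 1) = cellVec D ((s : ℕ × ℕ).1, (s : ℕ × ℕ).2 + 1) := by
  rw [youngY, Matrix.mulVecLin_apply, Matrix.mulVec_single]
  by_cases h : ((s : ℕ × ℕ).1, (s : ℕ × ℕ).2 + 1) ∈ D.cells
  · rw [cellVec_mem D h]
    funext t
    by_cases ht : t = (⟨_, h⟩ : ↥D.cells)
    · subst ht; simp [Matrix.of_apply]
    · have : ¬((t : ℕ × ℕ).1 = (s : ℕ × ℕ).1 ∧ (t : ℕ × ℕ).2 = (s : ℕ × ℕ).2 + 1) := by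
        intro ⟨h1, h2⟩
        exact ht (Subtype.ext (Prod.ext h1 h2))
      simp [Matrix.of_apply, this, Pi.single_eq_of_ne ht]
  · rw [cellVec_not_mem D h]
    funext t
    have : ¬((t : ℕ × ℕ).1 = (s : ℕ × ℕ).1 ∧ (t : ℕ × ℕ).2 = (s : ℕ × ℕ).2 + 1) := by
      intro ⟨h1, h2⟩
      exact h (by rw [← h1, ← h2]; exact t.2)
    simp [Matrix.of_apply, this]

lemma youngX_cellVec (q : ℕ × ℕ) :
    youngX D (cellVec D q) = cellVec D (q.1 + 1, q.2) := by
  by_cases h : q ∈ D.cells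
  · rw [cellVec_mem D h, youngX_single]
  · rw [cellVec_not_mem D h, map_zero, cellVec_not_mem]
    intro hmem
    rw [YoungDiagram.mem_cells] at hmem h
    exact h (D.up_left_mem (Nat.le_succ _) le_rfl hmem)

lemma youngY_cellVec (q : ℕ × ℕ) :
    youngY D (cellVec D q) = cellVec D (q.1, q.2 + 1) := by
  by_cases h : q ∈ D.cells
  · rw [cellVec_mem D h, youngY_single]
  · rw [cellVec_not_mem D h, map_zero, cellVec_not_mem]
    intro hmem
    rw [YoungDiagram.mem_cells] at hmem h
    exact h (D.up_left_mem le_rfl (Nat.le_succ _) hmem)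

lemma youngI_eq_cellVec : youngI D = cellVec D (0, 0) := by
  by_cases h : ((0 : ℕ), (0 : ℕ)) ∈ D.cells
  · rw [cellVec_mem D h]
    funext c
    by_cases hc : c = (⟨(0, 0), h⟩ : ↥D.cells)
    · subst hc; simp [youngI]
    · have h0 : (c : ℕ × ℕ) ≠ (0, 0) := fun hh => hc (Subtype.ext hh)
      rw [youngI, Pi.single_eq_of_ne hc, if_neg h0]
  · rw [cellVec_not_mem D h]
    funext c
    have h0 : (c : ℕ × ℕ) ≠ (0, 0) := fun hh => h (hh ▸ c.2)
    rw [youngI, if_neg h0]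
    rfl

lemma young_comm : youngX D ∘ₗ youngY D = youngY D ∘ₗ youngX D := by
  apply LinearMap.pi_ext'
  intro s
  apply LinearMap.ext_ring
  simp only [LinearMap.comp_apply, LinearMap.coe_single]
  show youngX D (youngY D (Pi.single s 1)) = youngY D (youngX D (Pi.single s 1))
  rw [youngY_single, youngX_single, youngX_cellVec, youngY_cellVec]

lemma young_vvec (p : ℕ × ℕ) :
    vvec (youngX D) (youngY D) (youngI D) p = cellVec D p := by
  have hcomm : youngX D * youngY D = youngY D * youngX D := by
    rw [Module.End.mul_eq_comp, Module.End.mul_eq_comp]; exact young_comm D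
  obtain ⟨i, j⟩ := p
  induction i with
  | zero =>
    induction j with
    | zero => rw [vvec_zero, youngI_eq_cellVec]
    | succ j ihj =>
      rw [← vvec_Y hcomm _ 0 j, ihj, youngY_cellVec]
  | succ i ihi =>
    rw [← vvec_X, ihi, youngX_cellVec]

end young

section young2
variable (D : YoungDiagram)

lemma young_stable :
    ∀ U : Submodule ℂ (↥D.cells → ℂ), youngI D ∈ U →
      (∀ w ∈ U, youngX D w ∈ U) → (∀ w ∈ U, youngY D w ∈ U) → U = ⊤ := by
  intro U hI hX hY
  have hv : ∀ p : ℕ × ℕ, vvec (youngX D) (youngY D) (youngI D) p ∈ U := by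
    intro ⟨i, j⟩
    induction i with
    | zero =>
      induction j with
      | zero => rw [vvec_zero]; exact hI
      | succ j ihj =>
        have hcomm : youngX D * youngY D = youngY D * youngX D := by
          rw [Module.End.mul_eq_comp, Module.End.mul_eq_comp]; exact young_comm D
        rw [← vvec_Y hcomm _ 0 j]
        exact hY _ ihj
    | succ i ihi =>
      rw [← vvec_X]
      exact hX _ ihi
  have hsingle : ∀ s : ↥D.cells, (Pi.single s 1 : ↥D.cells → ℂ) ∈ U := by
    intro s
    have := hv (s : ℕ × ℕ)
    rw [young_vvec, cellVec_mem D s.2] at this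
    simpa using this
  rw [Submodule.eq_top_iff']
  intro f
  have hf : f = ∑ s : ↥D.cells, f s • (Pi.single s 1 : ↥D.cells → ℂ) := by
    funext t
    rw [Finset.sum_apply]
    rw [Finset.sum_eq_single t]
    · simp
    · intro s _ hst; simp [Pi.single_eq_of_ne (Ne.symm hst)]
    · simp
  rw [hf]
  exact Submodule.sum_mem U fun s _ => Submodule.smul_mem U _ (hsingle s)

/-- Diagonal torus element acting on the span of the boxes. -/
noncomputable def diagEquiv (a b : ℂˣ) : (↥D.cells → ℂ) ≃ₗ[ℂ] (↥D.cells → ℂ) :=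
  LinearEquiv.piCongrRight
    (fun s : ↥D.cells => LinearEquiv.smulOfUnit (a ^ (s : ℕ × ℕ).1 * b ^ (s : ℕ × ℕ).2))

lemma diagEquiv_apply (a b : ℂˣ) (f : ↥D.cells → ℂ) (s : ↥D.cells) :
    diagEquiv D a b f s = ((a : ℂ) ^ (s : ℕ × ℕ).1 * (b : ℂ) ^ (s : ℕ × ℕ).2) * f s := by
  rfl

lemma diagEquiv_single (a b : ℂˣ) (s : ↥D.cells) :
    diagEquiv D a b (Pi.single s 1) =
      ((a : ℂ) ^ (s : ℕ × ℕ).1 * (b : ℂ) ^ (s : ℕ × ℕ).2) • (Pi.single s 1 : ↥D.cells → ℂ) := by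
  funext t
  rw [diagEquiv_apply]
  by_cases ht : t = s
  · subst ht; simp
  · simp [Pi.single_eq_of_ne ht]

lemma diagEquiv_cellVec (a b : ℂˣ) (q : ℕ × ℕ) :
    diagEquiv D a b (cellVec D q) =
      ((a : ℂ) ^ q.1 * (b : ℂ) ^ q.2) • cellVec D q := by
  by_cases h : q ∈ D.cells
  · rw [cellVec_mem D h, diagEquiv_single]
  · rw [cellVec_not_mem D h]; simp

lemma diagEquiv_symm_single (a b : ℂˣ) (s : ↥D.cells) :
    (diagEquiv D a b).symm (Pi.single s 1) =
      ((a : ℂ) ^ (s : ℕ × ℕ).1 * (b : ℂ) ^ (s : ℕ × ℕ).2)⁻¹ • (Pi.single s 1 : ↥D.cells → ℂ) := by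
  rw [LinearEquiv.symm_apply_eq, map_smul, diagEquiv_single, smul_smul,
    inv_mul_cancel₀ (mul_ne_zero (pow_ne_zero _ (Units.ne_zero a)) (pow_ne_zero _ (Units.ne_zero b))), one_smul]

lemma diag_conj_X (a b : ℂˣ) :
    (a : ℂ) • youngX D =
      (diagEquiv D a b).toLinearMap ∘ₗ youngX D ∘ₗ (diagEquiv D a b).symm.toLinearMap := by
  apply LinearMap.pi_ext'
  intro s
  apply LinearMap.ext_ring
  simp only [LinearMap.comp_apply, LinearMap.coe_single, LinearMap.smul_apply,
    LinearEquiv.coe_coe]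
  rw [diagEquiv_symm_single, map_smul, youngX_single, map_smul, diagEquiv_cellVec,
    smul_smul]
  congr 1
  have ha : (a : ℂ) ≠ 0 := Units.ne_zero a
  have hb : (b : ℂ) ≠ 0 := Units.ne_zero b
  field_simp
  ring

lemma diag_conj_Y (a b : ℂˣ) :
    (b : ℂ) • youngY D =
      (diagEquiv D a b).toLinearMap ∘ₗ youngY D ∘ₗ (diagEquiv D a b).symm.toLinearMap := by
  apply LinearMap.pi_ext'
  intro s
  apply LinearMap.ext_ring
  simp only [LinearMap.comp_apply, LinearMap.coe_single, LinearMap.smul_apply,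
    LinearEquiv.coe_coe]
  rw [diagEquiv_symm_single, map_smul, youngY_single, map_smul, diagEquiv_cellVec,
    smul_smul]
  congr 1
  have ha : (a : ℂ) ≠ 0 := Units.ne_zero a
  have hb : (b : ℂ) ≠ 0 := Units.ne_zero b
  field_simp
  ring

lemma diag_youngI (a b : ℂˣ) : diagEquiv D a b (youngI D) = youngI D := by
  rw [youngI_eq_cellVec, diagEquiv_cellVec]
  simp

end young2

section main
variable {n : ℕ}

/-- The canonical identification of the span of the boxes with `ℂⁿ`. -/
noncomputable def cellEquiv (D : YoungDiagram) (h : D.card = n) :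
    (↥D.cells → ℂ) ≃ₗ[ℂ] (Fin n → ℂ) :=
  LinearEquiv.funCongrLeft ℂ ℂ
    (Fintype.equivFinOfCardEq (by rw [Fintype.card_coe]; exact h)).symm

/-- The normal-form representative attached to a Young diagram. -/
noncomputable def PhiRep (Yh : {Y : YoungDiagram // Y.card = n}) : ADHMRep n :=
  transportADHM (cellEquiv Yh.1 Yh.2) (youngX Yh.1) (youngY Yh.1) (youngI Yh.1)

lemma scale_transport {W : Type*} [AddCommGroup W] [Module ℂ W]
    (a b : ℂˣ) (e : W ≃ₗ[ℂ] (Fin n → ℂ)) (A B : W →ₗ[ℂ] W) (c : W) :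
    scaleADHM a b (transportADHM e A B c) =
      transportADHM e ((a : ℂ) • A) ((b : ℂ) • B) c := by
  refine Prod.ext ?_ (Prod.ext ?_ rfl)
  · show (a : ℂ) • (e.toLinearMap ∘ₗ A ∘ₗ e.symm.toLinearMap) = _
    ext w; simp [transportADHM]
  · show (b : ℂ) • (e.toLinearMap ∘ₗ B ∘ₗ e.symm.toLinearMap) = _
    ext w; simp [transportADHM]

lemma transport_comp {W : Type*} [AddCommGroup W] [Module ℂ W]
    (d : W ≃ₗ[ℂ] W) (e : W ≃ₗ[ℂ] (Fin n → ℂ)) (A B : W →ₗ[ℂ] W) (c : W) :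
    transportADHM (d.trans e) A B c =
      transportADHM e (d.toLinearMap ∘ₗ A ∘ₗ d.symm.toLinearMap)
        (d.toLinearMap ∘ₗ B ∘ₗ d.symm.toLinearMap) (d c) := by
  refine Prod.ext ?_ (Prod.ext ?_ rfl)
  · ext w; simp [transportADHM]
  · ext w; simp [transportADHM]

lemma phi_stable (Yh : {Y : YoungDiagram // Y.card = n}) : IsStableADHM (PhiRep Yh) :=
  transport_stable _ _ _ _ (young_comm Yh.1) (young_stable Yh.1)

lemma phi_fixed (Yh : {Y : YoungDiagram // Y.card = n}) :
    IsFixedClass (Quot.mk (adhmRel n) (PhiRep Yh)) := by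
  intro a b y hy
  have h1 : adhmRel n y (PhiRep Yh) := (quot_mk_eq_iff _ _).mp hy
  have h2 := scale_rel a b h1
  have h3 : adhmRel n (scaleADHM a b (PhiRep Yh)) (PhiRep Yh) := by
    have key : scaleADHM a b (PhiRep Yh) =
        transportADHM ((diagEquiv Yh.1 a b).trans (cellEquiv Yh.1 Yh.2))
          (youngX Yh.1) (youngY Yh.1) (youngI Yh.1) := by
      rw [transport_comp, ← diag_conj_X, ← diag_conj_Y, diag_youngI, PhiRep, scale_transport]
    rw [key, PhiRep]
    exact transport_rel _ _ _ _ _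
  exact (quot_mk_eq_iff _ _).mpr ((adhmRel_equivalence n).trans h2 h3)

lemma rel_vvec {x y : ADHMRep n} (h : adhmRel n x y) :
    ∃ g : (Fin n → ℂ) ≃ₗ[ℂ] (Fin n → ℂ), ∀ p : ℕ × ℕ,
      vvec y.1 y.2.1 y.2.2 p = g (vvec x.1 x.2.1 x.2.2 p) := by
  obtain ⟨g, h1, h2, h3⟩ := h
  refine ⟨g, fun p => ?_⟩
  rw [h1, h2, h3]
  exact vvec_conj g _ _ _ p

lemma phi_vvec (Yh : {Y : YoungDiagram // Y.card = n}) (p : ℕ × ℕ) :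
    vvec (PhiRep Yh).1 (PhiRep Yh).2.1 (PhiRep Yh).2.2 p =
      cellEquiv Yh.1 Yh.2 (cellVec Yh.1 p) := by
  rw [show (PhiRep Yh).1 = (cellEquiv Yh.1 Yh.2).toLinearMap ∘ₗ youngX Yh.1 ∘ₗ
      (cellEquiv Yh.1 Yh.2).symm.toLinearMap from rfl,
    show (PhiRep Yh).2.1 = (cellEquiv Yh.1 Yh.2).toLinearMap ∘ₗ youngY Yh.1 ∘ₗ
      (cellEquiv Yh.1 Yh.2).symm.toLinearMap from rfl,
    show (PhiRep Yh).2.2 = cellEquiv Yh.1 Yh.2 (youngI Yh.1) from rfl,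
    vvec_conj, young_vvec]

lemma phi_injective : Function.Injective (fun Yh : {Y : YoungDiagram // Y.card = n} =>
    Quot.mk (adhmRel n) (PhiRep Yh)) := by
  intro Y1 Y2 h
  obtain ⟨g, hg⟩ := rel_vvec ((quot_mk_eq_iff _ _).mp h)
  have hmem : ∀ p : ℕ × ℕ, p ∈ Y1.1.cells ↔ p ∈ Y2.1.cells := by
    intro p
    rw [← cellVec_ne_zero_iff Y1.1 p, ← cellVec_ne_zero_iff Y2.1 p]
    have heq := hg p
    rw [phi_vvec, phi_vvec] at heq
    have hiff : cellVec Y1.1 p = 0 ↔ cellVec Y2.1 p = 0 := by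
      rw [← LinearEquiv.map_eq_zero_iff (cellEquiv Y2.1 Y2.2), heq,
        LinearEquiv.map_eq_zero_iff g, LinearEquiv.map_eq_zero_iff]
    exact not_iff_not.mpr hiff
  apply Subtype.ext
  apply YoungDiagram.ext
  exact Finset.ext hmem

end main

section surj
variable {n : ℕ}

lemma phi_surjective (c : ADHMModuli n) (hsc : IsStableClass c) (hfc : IsFixedClass c) :
    ∃ Yh : {Y : YoungDiagram // Y.card = n}, Quot.mk (adhmRel n) (PhiRep Yh) = c := by
  classical
  obtain ⟨x, hstab, hxc⟩ := hsc
  have hcm : x.1 * x.2.1 = x.2.1 * x.1 := by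
    rw [Module.End.mul_eq_comp, Module.End.mul_eq_comp]; exact hstab.1
  -- the span of all vectors `X^i Y^j I` is everything
  have span_top : Submodule.span ℂ (Set.range (vvec x.1 x.2.1 x.2.2)) = ⊤ := by
    apply hstab.2
    · exact Submodule.subset_span ⟨(0, 0), vvec_zero x.1 x.2.1 x.2.2⟩
    · intro w hw
      refine Submodule.span_induction ?_ ?_ ?_ ?_ hw
      · rintro w ⟨⟨i, j⟩, rfl⟩
        rw [vvec_X]
        exact Submodule.subset_span ⟨(i + 1, j), rfl⟩
      · rw [map_zero]; exact Submodule.zero_mem _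
      · intro w₁ w₂ _ _ h1 h2
        rw [map_add]; exact Submodule.add_mem _ h1 h2
      · intro a w₁ _ h1
        rw [map_smul]; exact Submodule.smul_mem _ _ h1
    · intro w hw
      refine Submodule.span_induction ?_ ?_ ?_ ?_ hw
      · rintro w ⟨⟨i, j⟩, rfl⟩
        rw [vvec_Y hcm]
        exact Submodule.subset_span ⟨(i, j + 1), rfl⟩
      · rw [map_zero]; exact Submodule.zero_mem _
      · intro w₁ w₂ _ _ h1 h2
        rw [map_add]; exact Submodule.add_mem _ h1 h2
      · intro a w₁ _ h1
        rw [map_smul]; exact Submodule.smul_mem _ _ h1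
  -- eigenvalue property of torus fixedness
  have hrel : ∀ a b : ℂˣ, adhmRel n x (scaleADHM a b x) := fun a b =>
    (quot_mk_eq_iff _ _).mp (hxc.trans (hfc a b x hxc).symm)
  have eigen : ∀ a b : ℂˣ, ∃ g : (Fin n → ℂ) ≃ₗ[ℂ] (Fin n → ℂ),
      ∀ p : ℕ × ℕ, g (vvec x.1 x.2.1 x.2.2 p) =
        ((a : ℂ) ^ p.1 * (b : ℂ) ^ p.2) • vvec x.1 x.2.1 x.2.2 p := by
    intro a b
    obtain ⟨g, h1, h2, h3⟩ := hrel a b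
    refine ⟨g, fun p => ?_⟩
    have hcj := vvec_conj g x.1 x.2.1 x.2.2 p
    rw [← h1, ← h2, ← h3] at hcj
    rw [show (scaleADHM a b x).1 = (a : ℂ) • x.1 from rfl,
        show (scaleADHM a b x).2.1 = (b : ℂ) • x.2.1 from rfl,
        show (scaleADHM a b x).2.2 = x.2.2 from rfl, vvec_smul] at hcj
    exact hcj.symm
  have indep_aux : ∀ (T : Finset (ℕ × ℕ)) (cf : ℕ × ℕ → ℂ),
      ∑ p ∈ T, cf p • vvec x.1 x.2.1 x.2.2 p = 0 →
        ∀ p ∈ T, cf p • vvec x.1 x.2.1 x.2.2 p = 0 := by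
    intro T cf hsum
    apply eigen_vanish T _
    intro a b ha hb
    obtain ⟨g, hg⟩ := eigen (Units.mk0 a ha) (Units.mk0 b hb)
    calc ∑ p ∈ T, (a ^ p.1 * b ^ p.2) • (cf p • vvec x.1 x.2.1 x.2.2 p)
        = ∑ p ∈ T, cf p • ((a ^ p.1 * b ^ p.2) • vvec x.1 x.2.1 x.2.2 p) := by
          refine Finset.sum_congr rfl fun p _ => ?_; rw [smul_comm]
      _ = ∑ p ∈ T, cf p • g (vvec x.1 x.2.1 x.2.2 p) := by
          refine Finset.sum_congr rfl fun p _ => ?_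
          rw [hg p, Units.val_mk0, Units.val_mk0]
      _ = ∑ p ∈ T, g (cf p • vvec x.1 x.2.1 x.2.2 p) := by
          refine Finset.sum_congr rfl fun p _ => ?_; rw [map_smul]
      _ = g (∑ p ∈ T, cf p • vvec x.1 x.2.1 x.2.2 p) := (map_sum g _ T).symm
      _ = 0 := by rw [hsum, map_zero]
  -- linear independence of the nonvanishing monomial vectors
  have indep : LinearIndependent ℂ
      (fun s : {p : ℕ × ℕ // vvec x.1 x.2.1 x.2.2 p ≠ 0} => vvec x.1 x.2.1 x.2.2 s.1) := by
    rw [linearIndependent_iff']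
    intro t cf hsum i hi
    set cc : ℕ × ℕ → ℂ := fun p =>
      if h : vvec x.1 x.2.1 x.2.2 p ≠ 0 then
        (if (⟨p, h⟩ : {q : ℕ × ℕ // vvec x.1 x.2.1 x.2.2 q ≠ 0}) ∈ t then cf ⟨p, h⟩ else 0)
      else 0 with hcc
    have cc_eq : ∀ j ∈ t, cc j.1 = cf j := by
      intro j hj
      rw [hcc]
      simp only
      rw [dif_pos j.2]
      show (if j ∈ t then cf j else 0) = cf j
      rw [if_pos hj]
    have hsum' : ∑ p ∈ t.image Subtype.val, cc p • vvec x.1 x.2.1 x.2.2 p = 0 := by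
      rw [Finset.sum_image (fun a _ b _ hab => Subtype.ext hab)]
      rw [Finset.sum_congr rfl (fun j hj => by rw [cc_eq j hj])]
      exact hsum
    have key := indep_aux _ _ hsum' i.1 (Finset.mem_image_of_mem _ hi)
    rw [cc_eq i hi] at key
    exact (smul_eq_zero.mp key).resolve_right i.2
  have hfinS : {p : ℕ × ℕ | vvec x.1 x.2.1 x.2.2 p ≠ 0}.Finite := by
    have : Finite {p : ℕ × ℕ // vvec x.1 x.2.1 x.2.2 p ≠ 0} := indep.finite_of_isNoetherian
    exact Set.finite_coe_iff.mp this
  -- the Young diagram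
  set D : YoungDiagram :=
    { cells := hfinS.toFinset
      isLowerSet := by
        intro p q hle hp
        simp only [Finset.coe_sort_coe, Finset.mem_coe, Set.Finite.mem_toFinset,
          Set.mem_setOf_eq] at hp ⊢
        intro h0
        apply hp
        have hq1 : q.1 ≤ p.1 := hle.1
        have hq2 : q.2 ≤ p.2 := hle.2
        have hpq : p = (q.1 + (p.1 - q.1), q.2 + (p.2 - q.2)) := Prod.ext (by omega) (by omega)
        rw [hpq, vvec_shift hcm, show (q.1, q.2) = q from rfl, h0, map_zero, map_zero] } with hD
  have hmemD : ∀ p : ℕ × ℕ, p ∈ D.cells ↔ vvec x.1 x.2.1 x.2.2 p ≠ 0 := by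
    intro p
    rw [hD]
    exact Set.Finite.mem_toFinset _
  have indepD : LinearIndependent ℂ (fun s : ↥D.cells => vvec x.1 x.2.1 x.2.2 ↑s) := by
    exact
      indep.comp (Equiv.subtypeEquivRight hmemD) (Equiv.subtypeEquivRight hmemD).injective
  have spanD : ⊤ ≤ Submodule.span ℂ
      (Set.range fun s : ↥D.cells => vvec x.1 x.2.1 x.2.2 ↑s) := by
    rw [← span_top]
    apply Submodule.span_le.mpr
    rintro w ⟨p, rfl⟩
    by_cases h : vvec x.1 x.2.1 x.2.2 p = 0
    · rw [h]; exact Submodule.zero_mem _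
    · exact Submodule.subset_span ⟨⟨p, (hmemD p).mpr h⟩, rfl⟩
  let bas : Basis ↥D.cells ℂ (Fin n → ℂ) := Basis.mk indepD spanD
  have cardD : D.card = n := by
    have h1 := Module.finrank_eq_card_basis bas
    rw [Module.finrank_fin_fun] at h1
    show D.cells.card = n
    rw [← Fintype.card_coe, ← h1]
  let e₀ : (↥D.cells → ℂ) ≃ₗ[ℂ] (Fin n → ℂ) := bas.equivFun.symm
  have he₀ : ∀ s : ↥D.cells, e₀ (Pi.single s 1) = vvec x.1 x.2.1 x.2.2 ↑s := by
    intro s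
    rw [show e₀ (Pi.single s 1) = bas.equivFun.symm (Pi.single s 1) from rfl,
      Basis.equivFun_symm_apply, Finset.sum_eq_single s]
    · rw [Pi.single_eq_same, one_smul, Basis.mk_apply]
    · intro j _ hj
      rw [Pi.single_eq_of_ne hj, zero_smul]
    · intro hs; exact absurd (Finset.mem_univ s) hs
  have he₀c : ∀ q : ℕ × ℕ, e₀ (cellVec D q) = vvec x.1 x.2.1 x.2.2 q := by
    intro q
    by_cases h : q ∈ D.cells
    · rw [cellVec_mem D h, he₀ ⟨q, h⟩]
    · rw [cellVec_not_mem D h, map_zero]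
      have hz : vvec x.1 x.2.1 x.2.2 q = 0 := by
        by_contra hh; exact h ((hmemD q).mpr hh)
      rw [hz]
  have hX : x.1 ∘ₗ e₀.toLinearMap = e₀.toLinearMap ∘ₗ youngX D := by
    apply LinearMap.pi_ext'
    intro s
    apply LinearMap.ext_ring
    simp only [LinearMap.comp_apply, LinearMap.coe_single, LinearEquiv.coe_coe]
    show x.1 (e₀ (Pi.single s 1)) = e₀ (youngX D (Pi.single s 1))
    rw [he₀ s, youngX_single, he₀c]
    exact vvec_X x.1 x.2.1 x.2.2 (s : ℕ × ℕ).1 (s : ℕ × ℕ).2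
  have hY : x.2.1 ∘ₗ e₀.toLinearMap = e₀.toLinearMap ∘ₗ youngY D := by
    apply LinearMap.pi_ext'
    intro s
    apply LinearMap.ext_ring
    simp only [LinearMap.comp_apply, LinearMap.coe_single, LinearEquiv.coe_coe]
    show x.2.1 (e₀ (Pi.single s 1)) = e₀ (youngY D (Pi.single s 1))
    rw [he₀ s, youngY_single, he₀c]
    exact vvec_Y hcm x.2.2 (s : ℕ × ℕ).1 (s : ℕ × ℕ).2
  have hI : x.2.2 = e₀ (youngI D) := by
    rw [youngI_eq_cellVec, he₀c, vvec_zero]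
  have x_eq : x = transportADHM e₀ (youngX D) (youngY D) (youngI D) := by
    refine Prod.ext ?_ (Prod.ext ?_ hI)
    · show x.1 = e₀.toLinearMap ∘ₗ youngX D ∘ₗ e₀.symm.toLinearMap
      apply LinearMap.ext
      intro w
      have h1 := LinearMap.congr_fun hX (e₀.symm w)
      simp only [LinearMap.comp_apply, LinearEquiv.coe_coe,
        LinearEquiv.apply_symm_apply] at h1 ⊢
      exact h1
    · show x.2.1 = e₀.toLinearMap ∘ₗ youngY D ∘ₗ e₀.symm.toLinearMap
      apply LinearMap.ext
      intro w
      have h1 := LinearMap.congr_fun hY (e₀.symm w)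
      simp only [LinearMap.comp_apply, LinearEquiv.coe_coe,
        LinearEquiv.apply_symm_apply] at h1 ⊢
      exact h1
  refine ⟨⟨D, cardD⟩, ?_⟩
  rw [← hxc]
  apply (quot_mk_eq_iff _ _).mpr
  rw [x_eq]
  exact transport_rel _ _ _ _ _

end surj

/-- **Torus fixed points of the Hilbert scheme of points on `ℂ²`.**
The torus-fixed `GL_n`-orbits of stable rank-one ADHM data `(X, Y, I)`
(equivalently, fixed points of `Hilbⁿ(ℂ²)`, equivalently monomial ideals of
colength `n` in `ℂ[x,y]`) are in bijection with Young diagrams with `n`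
boxes; moreover, the orbit attached to `Y` has a representative in the
normal form `ℂⁿ = ⊕_{(i,j) ∈ Y} ℂ e_{i,j}`, `X e_{i,j} = e_{i+1,j}`,
`Y e_{i,j} = e_{i,j+1}` (zero outside `Y`) and `I(1) = e_{0,0}`. -/
theorem hilbert_scheme_torus_fixed_points (n : ℕ) :
    ∃ F : {Y : YoungDiagram // Y.card = n} ≃
        {c : ADHMModuli n // IsStableClass c ∧ IsFixedClass c},
      ∀ Yh : {Y : YoungDiagram // Y.card = n},
        ∃ e : (↥Yh.1.cells → ℂ) ≃ₗ[ℂ] (Fin n → ℂ),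
          (F Yh : ADHMModuli n) = Quot.mk (adhmRel n)
            (e.toLinearMap ∘ₗ youngX Yh.1 ∘ₗ e.symm.toLinearMap,
             e.toLinearMap ∘ₗ youngY Yh.1 ∘ₗ e.symm.toLinearMap,
             e (youngI Yh.1)) := by
  classical
  let toFun : {Y : YoungDiagram // Y.card = n} →
      {c : ADHMModuli n // IsStableClass c ∧ IsFixedClass c} := fun Yh =>
    ⟨Quot.mk (adhmRel n) (PhiRep Yh), ⟨PhiRep Yh, phi_stable Yh, rfl⟩, phi_fixed Yh⟩
  have hbij : Function.Bijective toFun := by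
    constructor
    · intro Y1 Y2 h
      exact phi_injective (congrArg Subtype.val h)
    · rintro ⟨c, hs, hf⟩
      obtain ⟨Yh, hYh⟩ := phi_surjective c hs hf
      exact ⟨Yh, Subtype.ext hYh⟩
  refine ⟨Equiv.ofBijective toFun hbij, fun Yh => ⟨cellEquiv Yh.1 Yh.2, rfl⟩⟩
end
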